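/- Let R be an associative unital ring (not necessarily commutative), α : ℤ → R a family of elements, and S_s^k(n) the associated non-commutative Svinin polynomials. Then for every integer r ≥ 0 and every n ∈ ℤ, S_{r+1}^{r+1}(n+r) − S_{r+1}^{r+1}(n+r−1) = α_n · S_{r+1}^r(n+r) − S_{r+1}^r(n+r−2) · α_{n−1}. -/
import Mathlib


/-- Non-commutative Svinin polynomials: `svinin α s k n` is `S_s^k(n)`, defined by
`S_s^0(n) = 1` and `S_s^k(n) = Σ_{j=0}^{s−1} α_{n−k−j+1} · S_{s−j}^{k−1}(n−j)` for `k ≥ 1`. -/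
def svinin {R : Type*} [Ring R] (α : ℤ → R) : ℕ → ℕ → ℤ → R
  | _, 0, _ => 1
  | s, k + 1, n =>
      ∑ j ∈ Finset.range s,
        α (n - ((k : ℤ) + 1) - (j : ℤ) + 1) * svinin α (s - j) k (n - (j : ℤ))

lemma svinin_succ {R : Type*} [Ring R] (α : ℤ → R) (s k : ℕ) (n : ℤ) :
    svinin α s (k + 1) n =
      ∑ j ∈ Finset.range s,
        α (n - ((k : ℤ) + 1) - (j : ℤ) + 1) * svinin α (s - j) k (n - (j : ℤ)) := by
  rw [svinin]

lemma sum_tri {M : Type*} [AddCommMonoid M] (s : ℕ) (g : ℕ → ℕ → M) :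
    ∑ t ∈ Finset.range s, ∑ j ∈ Finset.range (t + 1), g j t =
      ∑ j ∈ Finset.range s, ∑ u ∈ Finset.range (s - j), g j (j + u) := by
  induction s with
  | zero => simp
  | succ s ih =>
      rw [Finset.sum_range_succ, ih]
      conv_rhs => rw [Finset.sum_range_succ]
      have h1 : ∀ j ∈ Finset.range s,
          ∑ u ∈ Finset.range (s + 1 - j), g j (j + u) =
            (∑ u ∈ Finset.range (s - j), g j (j + u)) + g j s := by
        intro j hj
        rw [Finset.mem_range] at hj
        have h2 : s + 1 - j = (s - j) + 1 := by omega
        rw [h2, Finset.sum_range_succ]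
        have h3 : j + (s - j) = s := by omega
        rw [h3]
      rw [Finset.sum_congr rfl h1, Finset.sum_add_distrib]
      have h4 : s + 1 - s = 1 := by omega
      rw [h4, Finset.sum_range_one, Finset.sum_range_succ, add_assoc]
      simp

lemma svinin_right_rec {R : Type*} [Ring R] (α : ℤ → R) (k : ℕ) : ∀ (s : ℕ) (n : ℤ),
    svinin α s (k + 1) n =
      ∑ t ∈ Finset.range s, svinin α (t + 1) k (n - 1) * α (n - (t : ℤ)) := by
  induction k with
  | zero =>
      intro s n
      rw [svinin_succ]
      refine Finset.sum_congr rfl fun j hj => ?_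
      show α (n - ((0:ℤ) + 1) - j + 1) * svinin α (s - j) 0 (n - j) =
        svinin α (j + 1) 0 (n - 1) * α (n - j)
      have h : n - ((0:ℤ) + 1) - j + 1 = n - j := by ring
      rw [h, svinin, svinin, one_mul, mul_one]
  | succ k ih =>
      intro s n
      rw [svinin_succ]
      push_cast
      have lhs : ∀ j ∈ Finset.range s,
          α (n - ((k:ℤ) + 1 + 1) - (j:ℤ) + 1) * svinin α (s - j) (k + 1) (n - j) =
          ∑ t ∈ Finset.range (s - j),
            α (n - ((k:ℤ) + 1 + 1) - (j:ℤ) + 1) *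
              (svinin α (t + 1) k (n - (j:ℤ) - 1) * α (n - (j:ℤ) - (t:ℤ))) := by
        intro j hj
        rw [ih, Finset.mul_sum]
      rw [Finset.sum_congr rfl lhs]
      have rhs : ∀ t ∈ Finset.range s,
          svinin α (t + 1) (k + 1) (n - 1) * α (n - (t:ℤ)) =
          ∑ j ∈ Finset.range (t + 1),
            α (n - 1 - ((k:ℤ) + 1) - (j:ℤ) + 1) * svinin α (t + 1 - j) k (n - 1 - (j:ℤ)) *
              α (n - (t:ℤ)) := by
        intro t ht
        rw [svinin_succ, Finset.sum_mul]
      rw [Finset.sum_congr rfl rhs]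
      rw [sum_tri s (fun j t =>
        α (n - 1 - ((k:ℤ) + 1) - (j:ℤ) + 1) * svinin α (t + 1 - j) k (n - 1 - (j:ℤ)) *
          α (n - (t:ℤ)))]
      refine Finset.sum_congr rfl fun j hj => Finset.sum_congr rfl fun u hu => ?_
      have h1 : j + u + 1 - j = u + 1 := by omega
      rw [h1]
      have h2 : n - 1 - ((k:ℤ) + 1) - (j:ℤ) + 1 = n - ((k:ℤ) + 1 + 1) - (j:ℤ) + 1 := by ring
      have h3 : n - 1 - (j:ℤ) = n - (j:ℤ) - 1 := by ring
      have h4 : n - ((j + u : ℕ) : ℤ) = n - (j:ℤ) - (u:ℤ) := by push_cast; ring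
      rw [h2, h3, h4, mul_assoc]

/-- For every `r ≥ 0` and `n ∈ ℤ`:
`S_{r+1}^{r+1}(n+r) − S_{r+1}^{r+1}(n+r−1) = α_n · S_{r+1}^r(n+r) − S_{r+1}^r(n+r−2) · α_{n−1}`. -/
theorem svinin_telescoping_identity {R : Type*} [Ring R] (α : ℤ → R)
    (r : ℕ) (n : ℤ) :
    svinin α (r + 1) (r + 1) (n + r) - svinin α (r + 1) (r + 1) (n + r - 1) =
      α n * svinin α (r + 1) r (n + r) - svinin α (r + 1) r (n + r - 2) * α (n - 1) := by
  rcases r with _ | r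
  · simp [svinin]
  · push_cast
    have sv_congr : ∀ (s s' k : ℕ) (m m' x x' : ℤ), s = s' → m = m' → x = x' →
        α x * svinin α s k m = α x' * svinin α s' k m' := by
      rintro s s' k m m' x x' rfl rfl rfl; rfl
    have key_step : ∀ (s k : ℕ) (m : ℤ),
        svinin α (s + 1) (k + 1) m =
          svinin α s (k + 1) m + svinin α (s + 1) k (m - 1) * α (m - (s : ℤ)) := by
      intro s k m
      rw [svinin_right_rec, svinin_right_rec, Finset.sum_range_succ]
    have hA : svinin α (r + 1 + 1) (r + 1 + 1) (n + (↑r + 1)) =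
        (∑ j ∈ Finset.range (r + 1),
            α (n - 1 - (j : ℤ)) * svinin α (r + 1 - j) (r + 1) (n + (r : ℤ) - (j : ℤ))) +
          α n * svinin α (r + 1 + 1) (r + 1) (n + (↑r + 1)) := by
      rw [svinin_succ, Finset.sum_range_succ']
      congr 1
      · refine Finset.sum_congr rfl fun j hj => ?_
        rw [Finset.mem_range] at hj
        exact sv_congr _ _ _ _ _ _ _ (by omega) (by push_cast; ring) (by push_cast; ring)
      · exact sv_congr _ _ _ _ _ _ _ (by omega) (by push_cast; ring) (by push_cast; ring)
    have hB : svinin α (r + 1 + 1) (r + 1 + 1) (n + (↑r + 1) - 1) =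
        (∑ j ∈ Finset.range (r + 1),
            α (n - 1 - (j : ℤ)) * svinin α (r + 1 + 1 - j) (r + 1) (n + (r : ℤ) - (j : ℤ))) +
          α (n - 2 - (r : ℤ)) * svinin α 1 (r + 1) (n - 1) := by
      rw [svinin_succ, Finset.sum_range_succ]
      congr 1
      · refine Finset.sum_congr rfl fun j hj => ?_
        rw [Finset.mem_range] at hj
        exact sv_congr _ _ _ _ _ _ _ (by omega) (by push_cast; ring) (by push_cast; ring)
      · exact sv_congr _ _ _ _ _ _ _ (by omega) (by push_cast; ring) (by push_cast; ring)
    have hC : svinin α (r + 1 + 1) (r + 1) (n + (↑r + 1) - 2) =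
        (∑ j ∈ Finset.range (r + 1),
            α (n - 1 - (j : ℤ)) * svinin α (r + 1 + 1 - j) r (n + (r : ℤ) - 1 - (j : ℤ))) +
          α (n - 2 - (r : ℤ)) * svinin α 1 r (n - 2) := by
      rw [svinin_succ, Finset.sum_range_succ]
      congr 1
      · refine Finset.sum_congr rfl fun j hj => ?_
        rw [Finset.mem_range] at hj
        exact sv_congr _ _ _ _ _ _ _ (by omega) (by push_cast; ring) (by push_cast; ring)
      · exact sv_congr _ _ _ _ _ _ _ (by omega) (by push_cast; ring) (by push_cast; ring)
    have hD : ∀ j ∈ Finset.range (r + 1),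
        α (n - 1 - (j : ℤ)) * svinin α (r + 1 + 1 - j) (r + 1) (n + (r : ℤ) - (j : ℤ)) =
          α (n - 1 - (j : ℤ)) * svinin α (r + 1 - j) (r + 1) (n + (r : ℤ) - (j : ℤ)) +
            α (n - 1 - (j : ℤ)) * svinin α (r + 1 + 1 - j) r (n + (r : ℤ) - 1 - (j : ℤ)) *
              α (n - 1) := by
      intro j hj
      rw [Finset.mem_range] at hj
      have e1 : r + 1 + 1 - j = (r + 1 - j) + 1 := by omega
      have e2 : (n + (r : ℤ) - (j : ℤ)) - 1 = n + (r : ℤ) - 1 - (j : ℤ) := by ring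
      have e3 : ((r + 1 - j : ℕ) : ℤ) = (r : ℤ) + 1 - (j : ℤ) := by omega
      have e4 : (n + (r : ℤ) - (j : ℤ)) - ((r : ℤ) + 1 - (j : ℤ)) = n - 1 := by ring
      rw [e1, key_step (r + 1 - j) r (n + (r : ℤ) - (j : ℤ)), e2, e3, e4, mul_add,
        ← mul_assoc, ← e1]
    have hE : svinin α 1 (r + 1) (n - 1) = svinin α 1 r (n - 2) * α (n - 1) := by
      rw [svinin_right_rec, Finset.sum_range_one]
      norm_num
      rw [show n - 1 - 1 = n - 2 from by ring]
    rw [hA, hB, hC, Finset.sum_congr rfl hD, hE, Finset.sum_add_distrib, add_mul,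
      Finset.sum_mul, mul_assoc]
    abel
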